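/- Let p be a prime, let m ≥ 1, and let s be a power of p with 1 < s < p^m. Then p^m + 1 does not divide (s + 1)(p^m − 1). -/
import Mathlib


/-- For a prime `p`, `m ≥ 1` and a power `s` of `p` with `1 < s < p^m`, the number
`p^m + 1` does not divide `(s + 1)(p^m - 1)`. -/
theorem not_dvd_add_one (p : ℕ) (hp : p.Prime) (m : ℕ) (hm : 1 ≤ m) (s : ℕ)
    (hs : ∃ i : ℕ, 1 ≤ i ∧ s = p ^ i) (hs1 : 1 < s) (hsm : s < p ^ m) :
    ¬ (p ^ m + 1) ∣ (s + 1) * (p ^ m - 1) := by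
  obtain ⟨i, hi1, rfl⟩ := hs
  intro hdvd
  have hpm : 1 ≤ p ^ m := Nat.one_le_pow _ _ hp.pos
  have him : i < m := (Nat.pow_lt_pow_iff_right hp.one_lt).mp hsm
  have h1 : (p ^ i + 1) * (p ^ m + 1) = (p ^ i + 1) * (p ^ m - 1) + 2 * (p ^ i + 1) := by
    have h : p ^ m + 1 = (p ^ m - 1) + 2 := by omega
    rw [h]; ring
  have key : (p ^ m + 1) ∣ 2 * (p ^ i + 1) := by
    have hL : (p ^ m + 1) ∣ (p ^ i + 1) * (p ^ m - 1) + 2 * (p ^ i + 1) := by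
      rw [← h1]; exact dvd_mul_left _ _
    exact (Nat.dvd_add_right hdvd).mp hL
  rcases eq_or_ne p 2 with hp2 | hp2
  · -- p = 2 : p^m + 1 is odd, so p^m+1 ∣ p^i + 1, contradiction by size
    subst hp2
    have hodd : Nat.Coprime (2 ^ m + 1) 2 := by
      have : ¬ (2 ∣ 2 ^ m + 1) := by
        intro h
        have : (2:ℕ) ∣ 2 ^ m := dvd_pow_self 2 (by omega)
        omega
      exact ((Nat.prime_two.coprime_iff_not_dvd).mpr this).symm
    have hdvd' : (2 ^ m + 1) ∣ (2 ^ i + 1) := hodd.dvd_of_dvd_mul_left key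
    have := Nat.le_of_dvd (by positivity) hdvd'
    omega
  · -- p odd : 2 * (p^i + 1) < p^m + 1
    have hp3 : 3 ≤ p := by
      have := hp.two_le
      omega
    have hile : p ^ i ≤ p ^ (m - 1) := Nat.pow_le_pow_right hp.pos (by omega)
    have hpm1 : p ^ m = p * p ^ (m - 1) := by
      conv_lhs => rw [show m = 1 + (m - 1) by omega, pow_add, pow_one]
    have h3 : 3 * p ^ (m - 1) ≤ p ^ m := by
      rw [hpm1]; exact Nat.mul_le_mul_right _ hp3
    have hpm2 : 3 ≤ p ^ (m - 1) := le_trans hp3 (Nat.le_self_pow (by omega) p)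
    have := Nat.le_of_dvd (by positivity) key
    omega
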